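/- There exists a finite Borel measure μ' on the hyperbolic plane with linear growth (μ'(B_h(w,s)) ≤ c·s for all w, s) whose centered maximal operator is not of weak type (1,1); namely μ' = m_1 + m_2' where m_2' is Lebesgue measure restricted to A' = {(x,y) : x > 0, 0 < y < e^{-x}}. -/
import Mathlib


open MeasureTheory Real Set

noncomputable section

/-- Open euclidean ball in `ℝ × ℝ` with center `c` and radius `r`. -/
def eBall (c : ℝ × ℝ) (r : ℝ) : Set (ℝ × ℝ) :=
  {p | (p.1 - c.1) ^ 2 + (p.2 - c.2) ^ 2 < r ^ 2}

/-- Open hyperbolic ball (upper half-plane model) with center `w` and radius `s`,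
characterized via `cosh (d_h p w) = 1 + |p - w|² / (2 p₂ w₂)`. -/
def hBall (w : ℝ × ℝ) (s : ℝ) : Set (ℝ × ℝ) :=
  {p | 0 < p.2 ∧ 1 + ((p.1 - w.1) ^ 2 + (p.2 - w.2) ^ 2) / (2 * p.2 * w.2) < Real.cosh s}

/-- The restriction to the upper half plane of the standard Gaussian measure on `ℝ²`. -/
def m1 : Measure (ℝ × ℝ) :=
  (volume.restrict {p : ℝ × ℝ | 0 < p.2}).withDensity
    (fun p => ENNReal.ofReal ((2 * π)⁻¹ * Real.exp (-(p.1 ^ 2 + p.2 ^ 2) / 2)))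

/-- The region `A = {(x,y) : x > 1, 0 < y < 1/x}`. -/
def regA : Set (ℝ × ℝ) := {p | 1 < p.1 ∧ 0 < p.2 ∧ p.2 < p.1⁻¹}

/-- Lebesgue measure restricted to `A`. -/
def m2 : Measure (ℝ × ℝ) := volume.restrict regA

/-- The measure `μ = m₁ + m₂`. -/
def mu : Measure (ℝ × ℝ) := m1 + m2

/-- The centered maximal function of a measure `ν` with respect to `μ`,
using hyperbolic balls. -/
def Mmax (μ ν : Measure (ℝ × ℝ)) (w : ℝ × ℝ) : ENNReal :=
  ⨆ (s : ℝ) (_ : 0 < s), ν (hBall w s) / μ (hBall w s)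

/-- The region `A' = {(x,y) : x > 0, 0 < y < e^{-x}}`. -/
def regA' : Set (ℝ × ℝ) := {p | 0 < p.1 ∧ 0 < p.2 ∧ p.2 < Real.exp (-p.1)}

/-- `μ' = m₁ +` Lebesgue measure restricted to `A'`. -/
def mu' : Measure (ℝ × ℝ) := m1 + volume.restrict regA'

lemma measurableSet_eBall (c : ℝ × ℝ) (r : ℝ) : MeasurableSet (eBall c r) := by
  have : Continuous fun p : ℝ × ℝ => (p.1 - c.1) ^ 2 + (p.2 - c.2) ^ 2 := by fun_prop
  exact measurableSet_lt this.measurable measurable_const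

lemma hBall_eq_eBall (w : ℝ × ℝ) (s : ℝ) (hw : 0 < w.2) (hs : 0 < s) :
    hBall w s = eBall (w.1, w.2 * Real.cosh s) (w.2 * Real.sinh s) := by
  have hid : Real.cosh s ^ 2 - Real.sinh s ^ 2 = 1 := Real.cosh_sq_sub_sinh_sq s
  have hcpos : 0 < Real.cosh s := Real.cosh_pos s
  have key : (w.2 * Real.sinh s) ^ 2 = (w.2 * Real.cosh s) ^ 2 - w.2 ^ 2 := by
    linear_combination (-(w.2 ^ 2)) * hid
  ext p
  simp only [hBall, eBall, mem_setOf_eq]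
  constructor
  · rintro ⟨hp2, hlt⟩
    have hden : 0 < 2 * p.2 * w.2 := by positivity
    rw [show (1 : ℝ) + ((p.1 - w.1) ^ 2 + (p.2 - w.2) ^ 2) / (2 * p.2 * w.2)
        = (2 * p.2 * w.2 + ((p.1 - w.1) ^ 2 + (p.2 - w.2) ^ 2)) / (2 * p.2 * w.2) by
          field_simp] at hlt
    rw [div_lt_iff₀ hden] at hlt
    nlinarith [hlt, key, hp2, hw]
  · intro hlt
    have hp2 : 0 < p.2 := by nlinarith [hlt, key, hcpos, hw, sq_nonneg (p.1 - w.1), sq_nonneg p.2, sq_nonneg w.2, mul_pos hw hcpos]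
    refine ⟨hp2, ?_⟩
    have hden : 0 < 2 * p.2 * w.2 := by positivity
    rw [show (1 : ℝ) + ((p.1 - w.1) ^ 2 + (p.2 - w.2) ^ 2) / (2 * p.2 * w.2)
        = (2 * p.2 * w.2 + ((p.1 - w.1) ^ 2 + (p.2 - w.2) ^ 2)) / (2 * p.2 * w.2) by
          field_simp]
    rw [div_lt_iff₀ hden]
    nlinarith [hlt, key, hp2, hw]

lemma m1_le_lintegral {B : Set (ℝ × ℝ)} (hB : MeasurableSet B) :
    m1 B ≤ ∫⁻ p in B, ENNReal.ofReal ((2 * π)⁻¹ * Real.exp (-(p.1 ^ 2 + p.2 ^ 2) / 2)) := by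
  rw [m1, withDensity_apply _ hB]
  exact lintegral_mono' (Measure.restrict_mono subset_rfl Measure.restrict_le_self) le_rfl

lemma m1_box_le {x1 x2 y1 y2 K : ℝ} (hx : x1 ≤ x2) (hy : y1 ≤ y2) (hK0 : 0 ≤ K)
    (hK : ∀ p : ℝ × ℝ, p ∈ Ioo x1 x2 ×ˢ Ioo y1 y2 →
      (2 * π)⁻¹ * Real.exp (-(p.1 ^ 2 + p.2 ^ 2) / 2) ≤ K) :
    m1 (Ioo x1 x2 ×ˢ Ioo y1 y2) ≤ ENNReal.ofReal (K * ((x2 - x1) * (y2 - y1))) := by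
  have hmeas : MeasurableSet (Ioo x1 x2 ×ˢ Ioo y1 y2) := measurableSet_Ioo.prod measurableSet_Ioo
  calc m1 (Ioo x1 x2 ×ˢ Ioo y1 y2)
      ≤ ∫⁻ p in Ioo x1 x2 ×ˢ Ioo y1 y2,
          ENNReal.ofReal ((2 * π)⁻¹ * Real.exp (-(p.1 ^ 2 + p.2 ^ 2) / 2)) :=
        m1_le_lintegral hmeas
    _ ≤ ∫⁻ _ in Ioo x1 x2 ×ˢ Ioo y1 y2, ENNReal.ofReal K :=
        setLIntegral_mono measurable_const (fun p hp => ENNReal.ofReal_le_ofReal (hK p hp))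
    _ = ENNReal.ofReal K * volume (Ioo x1 x2 ×ˢ Ioo y1 y2) := setLIntegral_const _ _
    _ = ENNReal.ofReal K * (ENNReal.ofReal (x2 - x1) * ENNReal.ofReal (y2 - y1)) := by
        rw [Measure.volume_eq_prod, Measure.prod_prod, Real.volume_Ioo, Real.volume_Ioo]
    _ = ENNReal.ofReal (K * ((x2 - x1) * (y2 - y1))) := by
        rw [ENNReal.ofReal_mul hK0, ENNReal.ofReal_mul (by linarith)]

lemma gauss_lintegral :
    (∫⁻ p : ℝ × ℝ, ENNReal.ofReal ((2 * π)⁻¹ * Real.exp (-(p.1 ^ 2 + p.2 ^ 2) / 2))) = 1 := by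
  have h1 : ∀ p : ℝ × ℝ, ENNReal.ofReal ((2 * π)⁻¹ * Real.exp (-(p.1 ^ 2 + p.2 ^ 2) / 2))
      = ENNReal.ofReal ((2 * π)⁻¹) *
        (ENNReal.ofReal (Real.exp (-2⁻¹ * p.1 ^ 2)) *
          ENNReal.ofReal (Real.exp (-2⁻¹ * p.2 ^ 2))) := by
    intro p
    rw [← ENNReal.ofReal_mul (by positivity), ← ENNReal.ofReal_mul (by positivity),
      ← Real.exp_add]
    ring_nf
  simp only [h1]
  rw [lintegral_const_mul' _ _ ENNReal.ofReal_ne_top]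
  rw [Measure.volume_eq_prod]
  rw [lintegral_prod_mul (f := fun x : ℝ => ENNReal.ofReal (Real.exp (-2⁻¹ * x ^ 2)))
    (g := fun x : ℝ => ENNReal.ofReal (Real.exp (-2⁻¹ * x ^ 2))) (by fun_prop) (by fun_prop)]
  have hg : (∫⁻ x : ℝ, ENNReal.ofReal (Real.exp (-2⁻¹ * x ^ 2))) =
      ENNReal.ofReal (Real.sqrt (2 * π)) := by
    rw [← ofReal_integral_eq_lintegral_ofReal (integrable_exp_neg_mul_sq (by norm_num : (0:ℝ) < 2⁻¹))
      (ae_of_all _ fun x => (Real.exp_pos _).le), integral_gaussian,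
      show (π / 2⁻¹) = 2 * π by ring]
  rw [hg, ← ENNReal.ofReal_mul (by positivity), Real.mul_self_sqrt (by positivity),
    ← ENNReal.ofReal_mul (by positivity), inv_mul_cancel₀ (by positivity),
    ENNReal.ofReal_one]

lemma m1_univ_le : m1 Set.univ ≤ 1 := by
  calc m1 Set.univ
      ≤ ∫⁻ p : ℝ × ℝ in Set.univ,
          ENNReal.ofReal ((2 * π)⁻¹ * Real.exp (-(p.1 ^ 2 + p.2 ^ 2) / 2)) :=
        m1_le_lintegral MeasurableSet.univ
    _ = 1 := by rw [Measure.restrict_univ, gauss_lintegral]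

lemma volA' : volume regA' = 1 := by
  have hreg : regA' = regionBetween (fun _ => (0 : ℝ)) (fun t => Real.exp (-t)) (Ioi 0) := by
    ext p
    simp [regA', regionBetween, mem_Ioo, mem_Ioi]
  rw [hreg, Measure.volume_eq_prod, volume_regionBetween_eq_lintegral
    aemeasurable_const (by fun_prop) measurableSet_Ioi]
  have hint : IntegrableOn (fun t : ℝ => Real.exp (-t)) (Ioi 0) := by
    simpa using exp_neg_integrableOn_Ioi 0 one_pos
  have : (∫⁻ t in Ioi (0:ℝ), ENNReal.ofReal (Real.exp (-t))) = ENNReal.ofReal 1 := by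
    rw [← ofReal_integral_eq_lintegral_ofReal hint
      (ae_of_all _ fun x => (Real.exp_pos _).le), integral_exp_neg_Ioi_zero]
  simp only [Pi.sub_apply, sub_zero]
  rw [this, ENNReal.ofReal_one]

lemma exp_nat_bounds : Real.exp 3 < 20.1 ∧ Real.exp 4 < 55 ∧ (143:ℝ) < Real.exp 5 ∧ (1000:ℝ) < Real.exp 7 := by
  have h9 : Real.exp 1 < 2.7182818286 := Real.exp_one_lt_d9
  have h9' : (2.7182818283:ℝ) < Real.exp 1 := Real.exp_one_gt_d9
  have hp : (0:ℝ) ≤ Real.exp 1 := (Real.exp_pos 1).le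
  have e3 : Real.exp 3 = Real.exp 1 ^ 3 := by rw [← Real.exp_nat_mul]; norm_num
  have e4 : Real.exp 4 = Real.exp 1 ^ 4 := by rw [← Real.exp_nat_mul]; norm_num
  have e5 : Real.exp 5 = Real.exp 1 ^ 5 := by rw [← Real.exp_nat_mul]; norm_num
  have e7 : Real.exp 7 = Real.exp 1 ^ 7 := by rw [← Real.exp_nat_mul]; norm_num
  refine ⟨?_, ?_, ?_, ?_⟩
  · rw [e3]
    calc Real.exp 1 ^ 3 ≤ 2.7182818286 ^ 3 := pow_le_pow_left₀ hp h9.le 3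
      _ < 20.1 := by norm_num
  · rw [e4]
    calc Real.exp 1 ^ 4 ≤ 2.7182818286 ^ 4 := pow_le_pow_left₀ hp h9.le 4
      _ < 55 := by norm_num
  · rw [e5]
    calc (143:ℝ) < 2.7182818283 ^ 5 := by norm_num
      _ ≤ Real.exp 1 ^ 5 := pow_le_pow_left₀ (by norm_num) h9'.le 5
  · rw [e7]
    calc (1000:ℝ) < 2.7182818283 ^ 7 := by norm_num
      _ ≤ Real.exp 1 ^ 7 := pow_le_pow_left₀ (by norm_num) h9'.le 7

lemma sinh_le_mul_exp {s : ℝ} (hs : 0 ≤ s) : Real.sinh s ≤ s * Real.exp s := by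
  have h1 : (-(2*s)) + 1 ≤ Real.exp (-(2*s)) := Real.add_one_le_exp _
  have h2 : Real.exp (-(2*s)) = Real.exp (-s) * Real.exp (-s) := by rw [← Real.exp_add]; ring_nf
  have h3 : Real.exp s * Real.exp (-s) = 1 := by rw [← Real.exp_add]; simp
  have h4 : Real.sinh s = (Real.exp s - Real.exp (-s))/2 := Real.sinh_eq s
  nlinarith [Real.exp_pos s, Real.exp_pos (-s), mul_pos (Real.exp_pos s) (Real.exp_pos (-s))]

lemma sq_exp_neg_le {t : ℝ} : t^2 * Real.exp (-t^2/2) ≤ 2 := by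
  have h1 : t^2/2 + 1 ≤ Real.exp (t^2/2) := Real.add_one_le_exp _
  have h2 : Real.exp (t^2/2) * Real.exp (-t^2/2) = 1 := by
    rw [← Real.exp_add, show t^2/2 + -t^2/2 = 0 by ring, Real.exp_zero]
  nlinarith [Real.exp_pos (-t^2/2), Real.exp_pos (t^2/2)]

lemma eBall_subset_box (x h r : ℝ) (hr0 : 0 < r) :
    eBall (x,h) r ⊆ Ioo (x-r) (x+r) ×ˢ Ioo (h-r) (h+r) := by
  rintro ⟨p1,p2⟩ hp
  simp only [eBall, mem_setOf_eq] at hp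
  simp only [mem_prod, mem_Ioo]
  have h1 : (p1-x)^2 < r^2 := by nlinarith [sq_nonneg (p2-h)]
  have h2 : (p2-h)^2 < r^2 := by nlinarith [sq_nonneg (p1-x)]
  refine ⟨⟨by nlinarith, by nlinarith⟩, ⟨by nlinarith, by nlinarith⟩⟩

lemma vol_box (x1 x2 y1 y2 : ℝ) (h2 : y1 ≤ y2) :
    volume (Ioo x1 x2 ×ˢ Ioo y1 y2) = ENNReal.ofReal ((x2-x1)*(y2-y1)) := by
  by_cases h1 : x1 ≤ x2
  · rw [Measure.volume_eq_prod, Measure.prod_prod, Real.volume_Ioo, Real.volume_Ioo,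
      ← ENNReal.ofReal_mul (by linarith)]
  · push_neg at h1
    rw [Measure.volume_eq_prod, Measure.prod_prod, Real.volume_Ioo, Real.volume_Ioo]
    rw [ENNReal.ofReal_eq_zero.mpr (by linarith), zero_mul,
      Eq.comm, ENNReal.ofReal_eq_zero]
    nlinarith

set_option maxHeartbeats 1000000 in
lemma growth_m1 (x y s : ℝ) (hw : 0 < y) (hs : 0 < s) (hs1 : s < 1) :
    m1 (eBall (x, y * Real.cosh s) (y * Real.sinh s)) ≤ ENNReal.ofReal (500 * s) := by
  have hsinh0 : 0 < Real.sinh s := Real.sinh_pos_iff.mpr hs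
  set h := y * Real.cosh s with hh_def
  set r := y * Real.sinh s with hr_def
  have hr0 : 0 < r := mul_pos hw hsinh0
  have hhr : h - r = y * Real.exp (-s) := by
    rw [hh_def, hr_def, ← mul_sub, Real.cosh_sub_sinh]
  set t := y * Real.exp (-s) with ht_def
  have ht0 : 0 < t := mul_pos hw (Real.exp_pos _)
  have hy_eq : y = t * Real.exp s := by
    rw [ht_def, mul_assoc, ← Real.exp_add]; simp
  have hes : Real.exp s ≤ Real.exp 1 := Real.exp_le_exp.mpr hs1.le
  have he1 : Real.exp 1 < 2.7182818286 := Real.exp_one_lt_d9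
  have hes0 : (0:ℝ) < Real.exp s := Real.exp_pos s
  have hsinh_le : Real.sinh s ≤ s * Real.exp s := sinh_le_mul_exp hs.le
  have hπ : (3:ℝ) < π := Real.pi_gt_three
  have hinv : (2*π)⁻¹ ≤ 6⁻¹ := by
    apply inv_anti₀ (by norm_num) (by linarith)
  have hbox : eBall (x,h) r ⊆ Ioo (x-r) (x+r) ×ˢ Ioo (h-r) (h+r) := eBall_subset_box x h r hr0
  have hr_le : r ≤ t * (s * (Real.exp s * Real.exp s)) := by
    rw [hr_def, hy_eq]
    have := mul_le_mul_of_nonneg_left hsinh_le (by positivity : (0:ℝ) ≤ t * Real.exp s)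
    nlinarith [this]
  have hKbound : ∀ p : ℝ×ℝ, p ∈ Ioo (x-r) (x+r) ×ˢ Ioo (h-r) (h+r) →
      (2*π)⁻¹ * Real.exp (-(p.1^2+p.2^2)/2) ≤ (2*π)⁻¹ * Real.exp (-t^2/2) := by
    intro p hp
    simp only [mem_prod, mem_Ioo] at hp
    have hp2 : t < p.2 := by rw [← hhr]; exact hp.2.1
    have hsq : t^2 ≤ p.1^2 + p.2^2 := by nlinarith [sq_nonneg p.1, ht0]
    have : Real.exp (-(p.1^2+p.2^2)/2) ≤ Real.exp (-t^2/2) :=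
      Real.exp_le_exp.mpr (by linarith)
    apply mul_le_mul_of_nonneg_left this (by positivity)
  calc m1 (eBall (x,h) r) ≤ m1 (Ioo (x-r) (x+r) ×ˢ Ioo (h-r) (h+r)) := measure_mono hbox
    _ ≤ ENNReal.ofReal ((2*π)⁻¹ * Real.exp (-t^2/2) * ((x+r-(x-r))*(h+r-(h-r)))) :=
        m1_box_le (by linarith) (by linarith) (by positivity) hKbound
    _ ≤ ENNReal.ofReal (500 * s) := by
        apply ENNReal.ofReal_le_ofReal
        have hF : (0:ℝ) < Real.exp (-t^2/2) := Real.exp_pos _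
        have ht2 : t^2 * Real.exp (-t^2/2) ≤ 2 := sq_exp_neg_le
        have hrsq : Real.exp (-t^2/2) * r^2 ≤ 2 * (s * (Real.exp s * Real.exp s))^2 := by
          have h1 : r^2 ≤ t^2 * (s * (Real.exp s * Real.exp s))^2 := by nlinarith [hr_le, hr0, ht0]
          calc Real.exp (-t^2/2) * r^2
              ≤ Real.exp (-t^2/2) * (t^2 * (s * (Real.exp s * Real.exp s))^2) := by
                apply mul_le_mul_of_nonneg_left h1 hF.le
            _ = (t^2 * Real.exp (-t^2/2)) * (s * (Real.exp s * Real.exp s))^2 := by ring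
            _ ≤ 2 * (s * (Real.exp s * Real.exp s))^2 := by
                apply mul_le_mul_of_nonneg_right ht2 (by positivity)
        have hE2 : Real.exp s * Real.exp s ≤ 7.39 := by nlinarith [hes, he1, hes0]
        have h4 : (Real.exp s * Real.exp s)^2 ≤ 55 := by nlinarith [hE2, mul_pos hes0 hes0]
        have hee : (s * (Real.exp s * Real.exp s))^2 ≤ s^2 * 55 := by
          nlinarith [mul_nonneg (sq_nonneg s) (by linarith : (0:ℝ) ≤ 55 - (Real.exp s * Real.exp s)^2)]
        have hFr : Real.exp (-t^2/2) * r^2 ≤ 110 * s^2 := by nlinarith [hrsq, hee]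
        have hs2 : s^2 ≤ s := by nlinarith
        have hπ0 : (0:ℝ) ≤ (2*π)⁻¹ := by positivity
        have hlhs : (x+r-(x-r))*(h+r-(h-r)) = 4*r^2 := by ring
        rw [hlhs]
        nlinarith [hFr, hinv, hs2, mul_nonneg hF.le (sq_nonneg r), hπ0]

set_option maxHeartbeats 1000000 in
lemma growth_leb (x y s : ℝ) (hw : 0 < y) (hs : 0 < s) (hs1 : s < 1) :
    volume (eBall (x, y * Real.cosh s) (y * Real.sinh s) ∩ regA') ≤ ENNReal.ofReal (500 * s) := by
  have hsinh0 : 0 < Real.sinh s := Real.sinh_pos_iff.mpr hs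
  set h := y * Real.cosh s with hh_def
  set r := y * Real.sinh s with hr_def
  have hr0 : 0 < r := mul_pos hw hsinh0
  have hhr : h - r = y * Real.exp (-s) := by
    rw [hh_def, hr_def, ← mul_sub, Real.cosh_sub_sinh]
  have hes : Real.exp s ≤ Real.exp 1 := Real.exp_le_exp.mpr hs1.le
  have he1 : Real.exp 1 < 2.7182818286 := Real.exp_one_lt_d9
  have hes0 : (0:ℝ) < Real.exp s := Real.exp_pos s
  have hsinh_le : Real.sinh s ≤ s * Real.exp s := sinh_le_mul_exp hs.le
  have hbox : eBall (x,h) r ⊆ Ioo (x-r) (x+r) ×ˢ Ioo (h-r) (h+r) := eBall_subset_box x h r hr0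
  by_cases hne : (eBall (x,h) r ∩ regA').Nonempty
  · obtain ⟨p, hpB, hpA⟩ := hne
    simp only [eBall, mem_setOf_eq] at hpB
    obtain ⟨hpA1, hpA2, hpA3⟩ := hpA
    have hp2u : p.2 < 1 := lt_of_lt_of_le hpA3 (by
      rw [show (1:ℝ) = Real.exp 0 by simp]
      exact Real.exp_le_exp.mpr (by linarith))
    have hp2l : h - r < p.2 := by nlinarith [hpB, hr0, sq_nonneg (p.1-x)]
    have hylt : y < Real.exp s := by
      have h1 : y * Real.exp (-s) < 1 := by rw [← hhr]; linarith
      have h2 : Real.exp (-s) * Real.exp s = 1 := by rw [← Real.exp_add]; simp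
      nlinarith [Real.exp_pos (-s), hes0]
    have hr_le' : r ≤ 2.72^2 * s := by
      have : r ≤ Real.exp s * (s * Real.exp s) := by
        rw [hr_def]
        exact mul_le_mul hylt.le hsinh_le hsinh0.le hes0.le
      nlinarith [this, hes, he1, hes0, hs]
    calc volume (eBall (x,h) r ∩ regA')
        ≤ volume (Ioo (x-r) (x+r) ×ˢ Ioo (h-r) (h+r)) :=
          measure_mono (Set.inter_subset_left.trans hbox)
      _ = ENNReal.ofReal ((x+r-(x-r))*(h+r-(h-r))) := vol_box _ _ _ _ (by linarith)
      _ ≤ ENNReal.ofReal (500 * s) := by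
          apply ENNReal.ofReal_le_ofReal
          have hs2 : s^2 ≤ s := by nlinarith
          nlinarith [hr_le', hr0, hs2]
  · rw [not_nonempty_iff_eq_empty] at hne
    rw [hne]
    simp

lemma growth (w : ℝ × ℝ) (s : ℝ) (hw : 0 < w.2) (hs : 0 < s) :
    mu' (hBall w s) ≤ ENNReal.ofReal (1000 * s) := by
  by_cases hs1 : 1 ≤ s
  · calc mu' (hBall w s) ≤ mu' Set.univ := measure_mono (subset_univ _)
      _ = m1 Set.univ + volume.restrict regA' Set.univ := by rw [mu', Measure.add_apply]
      _ ≤ 1 + 1 := by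
          refine add_le_add m1_univ_le ?_
          rw [Measure.restrict_apply_univ, volA']
      _ = ENNReal.ofReal 2 := by norm_num
      _ ≤ ENNReal.ofReal (1000*s) := ENNReal.ofReal_le_ofReal (by linarith)
  · push_neg at hs1
    have hBe : hBall w s = eBall (w.1, w.2 * Real.cosh s) (w.2 * Real.sinh s) :=
      hBall_eq_eBall w s hw hs
    have h1 := growth_m1 w.1 w.2 s hw hs hs1
    have h2 := growth_leb w.1 w.2 s hw hs hs1
    calc mu' (hBall w s)
        = m1 (eBall (w.1, w.2 * Real.cosh s) (w.2 * Real.sinh s)) +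
          volume.restrict regA' (eBall (w.1, w.2 * Real.cosh s) (w.2 * Real.sinh s)) := by
          rw [hBe, mu', Measure.add_apply]
      _ ≤ ENNReal.ofReal (500*s) + ENNReal.ofReal (500*s) := by
          refine add_le_add h1 ?_
          rw [Measure.restrict_apply (measurableSet_eBall _ _)]
          exact h2
      _ = ENNReal.ofReal (1000*s) := by
          rw [← ENNReal.ofReal_add (by positivity) (by positivity)]
          congr 1; ring

set_option maxHeartbeats 1000000 in
lemma key_m1 (a x h r : ℝ) (ha : 30 ≤ a) (hx1 : a - 1 < x)
    (hhub : h ≤ 1.03) (hrub : r ≤ h) (hrlb : 0.4 ≤ r) :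
    m1 (eBall (x, h) r) ≤ ENNReal.ofReal (Real.exp (-(3/2) * a)) := by
  have hπ : (3:ℝ) < π := Real.pi_gt_three
  have hr0 : 0 < r := by linarith
  have hbox := eBall_subset_box x h r hr0
  have hKbound : ∀ p : ℝ×ℝ, p ∈ Ioo (x-r) (x+r) ×ˢ Ioo (h-r) (h+r) →
      (2*π)⁻¹ * Real.exp (-(p.1^2+p.2^2)/2) ≤ (2*π)⁻¹ * Real.exp (-(a-3)^2/2) := by
    intro p hp
    simp only [mem_prod, mem_Ioo] at hp
    have hp1 : a - 3 < p.1 := by nlinarith [hp.1.1]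
    have hsq : (a-3)^2 ≤ p.1^2 + p.2^2 := by nlinarith [sq_nonneg p.2, ha]
    exact mul_le_mul_of_nonneg_left (Real.exp_le_exp.mpr (by linarith)) (by positivity)
  calc m1 (eBall (x,h) r) ≤ m1 (Ioo (x-r) (x+r) ×ˢ Ioo (h-r) (h+r)) := measure_mono hbox
    _ ≤ ENNReal.ofReal ((2*π)⁻¹ * Real.exp (-(a-3)^2/2) * ((x+r-(x-r))*(h+r-(h-r)))) :=
        m1_box_le (by linarith) (by linarith) (by positivity) hKbound
    _ ≤ ENNReal.ofReal (Real.exp (-(3/2) * a)) := by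
        apply ENNReal.ofReal_le_ofReal
        have hE : Real.exp (-(a-3)^2/2) ≤ Real.exp (-(3/2) * a) :=
          Real.exp_le_exp.mpr (by nlinarith)
        have hE0 : 0 < Real.exp (-(a-3)^2/2) := Real.exp_pos _
        have harea : (x+r-(x-r))*(h+r-(h-r)) = 4*r^2 := by ring
        rw [harea]
        have hc : (2*π)⁻¹ * (4*r^2) ≤ 1 := by
          have h6 : (2*π)⁻¹ ≤ 6⁻¹ := inv_anti₀ (by norm_num) (by linarith)
          nlinarith [sq_nonneg r, h6]
        nlinarith [Real.exp_pos (-(3/2) * a), hE, hE0, hc, sq_nonneg r,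
          mul_pos (by positivity : (0:ℝ) < (2*π)⁻¹) hE0]

set_option maxHeartbeats 1000000 in
lemma key_leb (a x h r : ℝ) (ha : 30 ≤ a) (hx1 : a - 1 < x)
    (hhub : h ≤ 1.03) (hrub : r ≤ h) (hrlb : 0.4 ≤ r) (he3 : Real.exp 3 < 20.1) :
    volume (eBall (x, h) r ∩ regA') ≤ ENNReal.ofReal (282 * Real.exp (-(3/2) * a)) := by
  have hr0 : 0 < r := by linarith
  have hsub : eBall (x, h) r ∩ regA' ⊆
      Ioo (x - 7*Real.exp (-a/2)) (x + 7*Real.exp (-a/2)) ×ˢ Ioo 0 (Real.exp (3 - a)) := by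
    rintro ⟨p1, p2⟩ ⟨hpB, hpA⟩
    simp only [eBall, mem_setOf_eq] at hpB
    obtain ⟨hpA1, hpA2, hpA3⟩ := hpA
    simp only [mem_prod, mem_Ioo]
    have hp1l : x - r < p1 := by nlinarith [sq_nonneg (p2 - h)]
    have hp2u : p2 < Real.exp (3 - a) := by
      calc p2 < Real.exp (-p1) := hpA3
        _ ≤ Real.exp (3 - a) := Real.exp_le_exp.mpr (by linarith)
    have hexp3a : Real.exp (3 - a) = Real.exp 3 * Real.exp (-a) := by
      rw [← Real.exp_add]; ring_nf
    have hsplit : Real.exp (-a/2) * Real.exp (-a/2) = Real.exp (-a) := by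
      rw [← Real.exp_add]; ring_nf
    have hq : (p1 - x)^2 < p2 * (r + h) := by
      nlinarith [hpB, sq_nonneg (2*p2 - (h - r)),
        mul_nonneg (sub_nonneg.mpr hrub) (by linarith : (0:ℝ) ≤ 3*h + 5*r)]
    have hq2 : (p1 - x)^2 < 42 * Real.exp (-a) := by
      have hb : p2 * (r + h) ≤ Real.exp (3-a) * 2.06 := by nlinarith [hpA2, hp2u, hrub, hhub]
      nlinarith [Real.exp_pos (-a), he3, hb, hexp3a]
    have h49 : (42:ℝ) * Real.exp (-a) < (7*Real.exp (-a/2))^2 := by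
      nlinarith [Real.exp_pos (-a), hsplit, Real.exp_pos (-a/2)]
    have habs : (p1 - x)^2 < (7*Real.exp (-a/2))^2 := by linarith
    have hpos : (0:ℝ) < 7*Real.exp (-a/2) := by positivity
    exact ⟨⟨by nlinarith, by nlinarith⟩, ⟨hpA2, hp2u⟩⟩
  calc volume (eBall (x, h) r ∩ regA')
      ≤ volume (Ioo (x - 7*Real.exp (-a/2)) (x + 7*Real.exp (-a/2)) ×ˢ
          Ioo 0 (Real.exp (3 - a))) := measure_mono hsub
    _ = ENNReal.ofReal ((x + 7*Real.exp (-a/2) - (x - 7*Real.exp (-a/2))) *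
          (Real.exp (3-a) - 0)) := vol_box _ _ _ _ (Real.exp_pos _).le
    _ ≤ ENNReal.ofReal (282 * Real.exp (-(3/2) * a)) := by
        apply ENNReal.ofReal_le_ofReal
        have h1 : Real.exp (-a/2) * Real.exp (3 - a) = Real.exp 3 * Real.exp (-(3/2) * a) := by
          rw [← Real.exp_add, ← Real.exp_add]; ring_nf
        nlinarith [Real.exp_pos (-(3/2)*a), Real.exp_pos (-a/2), Real.exp_pos (3-a), he3, h1]

set_option maxHeartbeats 1000000 in
lemma key (a x y : ℝ) (ha : 30 ≤ a) (hx1 : a - 1 < x) (hx2 : x < a)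
    (hy0 : 0 < y) (hy1 : y < Real.exp (-a)) :
    ∃ s : ℝ, 0 < s ∧ ((a, 1) : ℝ × ℝ) ∈ hBall (x, y) s ∧
      mu' (hBall (x, y) s) ≤ ENNReal.ofReal (283 * Real.exp (-(3/2) * a)) := by
  obtain ⟨he3, he4, he5, he7⟩ := exp_nat_bounds
  have hy100 : y < 1/100 := by
    have h1 : Real.exp (-a) ≤ Real.exp (-5) := Real.exp_le_exp.mpr (by linarith)
    have h2 : Real.exp (-5) * Real.exp 5 = 1 := by rw [← Real.exp_add]; norm_num
    nlinarith [Real.exp_pos (-5), Real.exp_pos 5]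
  set d2 := (a - x)^2 + (1 - y)^2 with hd2_def
  set D := 1 + (d2 + 2*y)/(2*y) with hD_def
  set s := Real.log (2*D) with hs_def
  set h := y * Real.cosh s with hh_def
  set r := y * Real.sinh s with hr_def
  have hd2l : (0.9:ℝ) ≤ d2 := by rw [hd2_def]; nlinarith [hy100, hy0]
  have hd2u : d2 ≤ 2 := by rw [hd2_def]; nlinarith [hx1, hx2, hy100, hy0]
  have hDeq : D = 2 + d2/(2*y) := by
    rw [hD_def]; field_simp; ring
  have hD1 : 1 < D := by
    rw [hDeq]
    have : 0 ≤ d2/(2*y) := by positivity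
    linarith
  have h2D : (1:ℝ) < 2*D := by linarith
  have hs : 0 < s := Real.log_pos h2D
  have hexps : Real.exp s = 2*D := Real.exp_log (by linarith)
  have hexpns : Real.exp (-s) = (2*D)⁻¹ := by rw [Real.exp_neg, hexps]
  have hcosh : Real.cosh s = (2*D + (2*D)⁻¹)/2 := by rw [Real.cosh_eq, hexps, hexpns]
  have hsinh : Real.sinh s = (2*D - (2*D)⁻¹)/2 := by rw [Real.sinh_eq, hexps, hexpns]
  have hDinv : 0 < (2*D)⁻¹ ∧ (2*D)⁻¹ ≤ 1 := by
    constructor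
    · positivity
    · rw [inv_le_one_iff₀]; right; linarith
  have hyD : y * D = d2/2 + 2*y := by
    rw [hD_def]; field_simp; ring
  have hh_val : h = y*D + y*(2*D)⁻¹/2 := by rw [hh_def, hcosh]; ring
  have hr_val : r = y*D - y*(2*D)⁻¹/2 := by rw [hr_def, hsinh]; ring
  -- membership of the point (a,1)
  have hmem : ((a, 1) : ℝ × ℝ) ∈ hBall (x, y) s := by
    refine ⟨one_pos, ?_⟩
    show 1 + ((a - x)^2 + (1 - y)^2) / (2 * 1 * y) < Real.cosh s
    have h21y : (2 * 1 * y) = 2*y := by ring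
    rw [h21y, ← hd2_def, hcosh]
    have h1 : 2*D + (2*D)⁻¹ > 2*D := by linarith [hDinv.1]
    have h2 : 1 + d2/(2*y) < D := by rw [hDeq]; linarith
    linarith [hDinv.1, h2]
  have hBe : hBall (x, y) s = eBall (x, h) r := by
    have := hBall_eq_eBall (x, y) s (by exact hy0) hs
    simpa using this
  clear_value d2 D s h r
  have htiny : y*(2*D)⁻¹/2 ≤ y := by nlinarith [hDinv.1, hDinv.2, hy0]
  have htiny0 : 0 ≤ y*(2*D)⁻¹/2 := by positivity
  have hhub : h ≤ 1.03 := by nlinarith [hh_val, hyD]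
  have hrub : r ≤ h := by rw [hh_val, hr_val]; nlinarith
  have hrlb : 0.4 ≤ r := by nlinarith [hr_val, hyD]
  refine ⟨s, hs, hmem, ?_⟩
  rw [hBe]
  calc mu' (eBall (x, h) r)
      = m1 (eBall (x, h) r) + volume.restrict regA' (eBall (x, h) r) := by
        rw [mu', Measure.add_apply]
    _ ≤ ENNReal.ofReal (Real.exp (-(3/2) * a)) + ENNReal.ofReal (282 * Real.exp (-(3/2) * a)) := by
        refine add_le_add (key_m1 a x h r ha hx1 hhub hrub hrlb) ?_
        rw [Measure.restrict_apply (measurableSet_eBall _ _)]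
        exact key_leb a x h r ha hx1 hhub hrub hrlb he3
    _ = ENNReal.ofReal (283 * Real.exp (-(3/2) * a)) := by
        rw [← ENNReal.ofReal_add (by positivity) (by positivity)]
        congr 1; ring

set_option maxHeartbeats 1000000 in
theorem stmt19 :
    mu' Set.univ < ⊤ ∧
    (∃ c : ℝ, 0 < c ∧ ∀ (w : ℝ × ℝ) (s : ℝ), 0 < w.2 → 0 < s →
      mu' (hBall w s) ≤ ENNReal.ofReal (c * s)) ∧
    ¬ ∃ C : ℝ, 0 < C ∧ ∀ (ν : Measure (ℝ × ℝ)), IsFiniteMeasure ν →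
      ∀ lam : ℝ, 0 < lam →
        mu' {w : ℝ × ℝ | ENNReal.ofReal lam < Mmax mu' ν w} ≤
          ENNReal.ofReal C * ν {p : ℝ × ℝ | 0 < p.2} / ENNReal.ofReal lam := by
  refine ⟨?_, ⟨1000, by norm_num, fun w s hw hs => growth w s hw hs⟩, ?_⟩
  · have h1 : mu' Set.univ ≤ 1 + 1 := by
      rw [mu', Measure.add_apply]
      refine add_le_add m1_univ_le ?_
      rw [Measure.restrict_apply_univ, volA']
    exact lt_of_le_of_lt h1 (by norm_num)
  · rintro ⟨C, hC, hweak⟩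
    obtain ⟨he3, he4, he5, he7⟩ := exp_nat_bounds
    set a := 30 + 4 * max 0 (Real.log C) with ha_def
    have hmax0 : 0 ≤ max 0 (Real.log C) := le_max_left _ _
    have ha : 30 ≤ a := by rw [ha_def]; linarith
    set lam := Real.exp ((5/4) * a) with hlam_def
    have hlam : 0 < lam := Real.exp_pos _
    set z0 : ℝ × ℝ := (a, 1) with hz0_def
    set ν : Measure (ℝ × ℝ) := Measure.dirac z0 with hν_def
    set ε := 283 * Real.exp (-(3/2) * a) with hε_def
    have hε : 0 < ε := by positivity
    have hlamε : lam * ε < 1 := by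
      have h1 : Real.exp ((5/4)*a) * Real.exp (-(3/2)*a) = Real.exp (-(1/4)*a) := by
        rw [← Real.exp_add]; ring_nf
      have h2 : Real.exp (-(1/4)*a) * Real.exp ((1/4)*a) = 1 := by
        rw [← Real.exp_add]; ring_nf; exact Real.exp_zero
      have h3 : Real.exp 7 ≤ Real.exp ((1/4)*a) := Real.exp_le_exp.mpr (by linarith)
      have h4 : (283:ℝ) < Real.exp ((1/4)*a) := by linarith
      have h5 : 0 < Real.exp ((1/4)*a) := Real.exp_pos _
      have h6 : 0 < Real.exp (-(1/4)*a) := Real.exp_pos _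
      calc lam * ε = 283 * (Real.exp ((5/4)*a) * Real.exp (-(3/2)*a)) := by
            rw [hlam_def, hε_def]; ring
        _ = 283 * Real.exp (-(1/4)*a) := by rw [h1]
        _ < 1 := by nlinarith
    set S := Ioo (a-1) a ×ˢ Ioo 0 (Real.exp (-a)) with hS_def
    have hSsub : S ⊆ {w : ℝ × ℝ | ENNReal.ofReal lam < Mmax mu' ν w} := by
      rintro ⟨x, y⟩ hw
      simp only [hS_def, mem_prod, mem_Ioo] at hw
      obtain ⟨⟨hx1, hx2⟩, hy1, hy2⟩ := hw
      obtain ⟨s, hs, hmem, hbound⟩ := key a x y ha hx1 hx2 hy1 hy2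
      simp only [mem_setOf_eq]
      have hmeas : MeasurableSet (hBall (x, y) s) := by
        rw [hBall_eq_eBall (x, y) s (by exact hy1) hs]
        exact measurableSet_eBall _ _
      have hν1 : ν (hBall (x, y) s) = 1 := by
        rw [hν_def, Measure.dirac_apply' _ hmeas, indicator_of_mem hmem]
        rfl
      have hstep : ENNReal.ofReal lam < ν (hBall (x,y) s) / mu' (hBall (x,y) s) := by
        rw [hν1]
        have hlt : lam < ε⁻¹ := by
          rw [show ε⁻¹ = 1/ε by rw [one_div]]
          exact (lt_div_iff₀ hε).mpr (by linarith [hlamε])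
        calc ENNReal.ofReal lam < ENNReal.ofReal ε⁻¹ := by
              rw [ENNReal.ofReal_lt_ofReal_iff (by positivity)]
              exact hlt
          _ = (ENNReal.ofReal ε)⁻¹ := ENNReal.ofReal_inv_of_pos hε
          _ ≤ (mu' (hBall (x,y) s))⁻¹ := by
              exact ENNReal.inv_le_inv' hbound
          _ = 1 / mu' (hBall (x,y) s) := (one_div _).symm
      refine lt_of_lt_of_le hstep ?_
      exact le_iSup₂ (f := fun (s : ℝ) (_ : 0 < s) =>
        ν (hBall (x,y) s) / mu' (hBall (x,y) s)) s hs
    have hSmeas : MeasurableSet S := measurableSet_Ioo.prod measurableSet_Ioo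
    have hSA : S ⊆ regA' := by
      rintro ⟨x, y⟩ hw
      simp only [hS_def, mem_prod, mem_Ioo] at hw
      obtain ⟨⟨hx1, hx2⟩, hy1, hy2⟩ := hw
      exact ⟨by simp; linarith, hy1, lt_of_lt_of_le hy2 (Real.exp_le_exp.mpr (by simp; linarith))⟩
    have hSlow : ENNReal.ofReal (Real.exp (-a)) ≤ mu' S := by
      have h1 : volume.restrict regA' S = volume S := by
        rw [Measure.restrict_apply hSmeas, inter_eq_self_of_subset_left hSA]
      have h2 : volume S = ENNReal.ofReal (Real.exp (-a)) := by
        rw [hS_def, vol_box _ _ _ _ (Real.exp_pos _).le]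
        congr 1
        ring_nf
      calc ENNReal.ofReal (Real.exp (-a)) = volume.restrict regA' S := by rw [h1, h2]
        _ ≤ m1 S + volume.restrict regA' S := le_add_self
        _ = mu' S := by rw [mu', Measure.add_apply]
    have hν2 : ν {p : ℝ × ℝ | 0 < p.2} = 1 := by
      have hm : MeasurableSet {p : ℝ × ℝ | 0 < p.2} :=
        measurableSet_lt measurable_const measurable_snd
      rw [hν_def, Measure.dirac_apply' _ hm, indicator_of_mem (by norm_num : z0 ∈ _)]
      rfl
    have hchain : ENNReal.ofReal (Real.exp (-a)) ≤ ENNReal.ofReal (C / lam) := by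
      calc ENNReal.ofReal (Real.exp (-a)) ≤ mu' S := hSlow
        _ ≤ mu' {w : ℝ × ℝ | ENNReal.ofReal lam < Mmax mu' ν w} := measure_mono hSsub
        _ ≤ ENNReal.ofReal C * ν {p : ℝ × ℝ | 0 < p.2} / ENNReal.ofReal lam :=
            hweak ν (by infer_instance) lam hlam
        _ = ENNReal.ofReal (C / lam) := by
            rw [hν2, mul_one, ← ENNReal.ofReal_div_of_pos hlam]
    have hreal : Real.exp (-a) ≤ C / lam :=
      (ENNReal.ofReal_le_ofReal_iff (by positivity)).mp hchain
    have hfin : Real.exp (-a) * lam ≤ C := by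
      rw [le_div_iff₀ hlam] at hreal; linarith
    have hlamea : Real.exp (-a) * lam = Real.exp ((1/4)*a) := by
      rw [hlam_def, ← Real.exp_add]; ring_nf
    have hCl : C < Real.exp ((1/4)*a) := by
      have h1 : C = Real.exp (Real.log C) := (Real.exp_log hC).symm
      calc C = Real.exp (Real.log C) := h1
        _ ≤ Real.exp (max 0 (Real.log C)) := Real.exp_le_exp.mpr (le_max_right _ _)
        _ < Real.exp ((1/4)*a) := Real.exp_lt_exp.mpr (by rw [ha_def]; linarith)
    rw [hlamea] at hfin
    linarith
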